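/- Let p : ℝ → [1,∞) be a measurable variable exponent with p(x) = 2 for x ∈ (−∞,−2) and p(x) ≥ 4 for x ∈ [2,∞), and let u(x) = |x|^{−1/3} χ_{[2,∞)}(x). Then ∫_ℝ |u(x)|^{p(x)} dx < ∞, yet ∫_ℝ |M u(x)|^{p(x)} dx = ∞, where M u(x) = sup_{r>0} (1/(2r)) ∫_{x−r}^{x+r} |u(s)| ds is the Hardy–Littlewood maximal function; hence the maximal operator is not bounded on variable exponent Lebesgue spaces in general. -/

import Mathlib

open MeasureTheory Set Filter
open scoped ENNReal Topology

noncomputable section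

/-- The centered Hardy–Littlewood maximal function on `ℝ`:
`M u(x) = sup_{r>0} (1/(2r)) ∫_{x-r}^{x+r} |u(s)| ds`. -/
def HLmax (u : ℝ → ℝ) (x : ℝ) : ℝ≥0∞ :=
  ⨆ (r : ℝ) (_ : 0 < r),
    ENNReal.ofReal ((1 / (2 * r)) * ∫ s in (x - r)..(x + r), |u s|)

theorem stmt15
    (p : ℝ → ℝ) (hpmeas : Measurable p) (hp1 : ∀ x, 1 ≤ p x)
    (hp2 : ∀ x < (-2 : ℝ), p x = 2) (hp4 : ∀ x ≥ (2 : ℝ), 4 ≤ p x)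
    (u : ℝ → ℝ)
    (hu : u = fun x => if 2 ≤ x then |x| ^ (-(1 / 3) : ℝ) else 0) :
    (∫⁻ x : ℝ, ENNReal.ofReal (|u x| ^ p x)) < ⊤ ∧
    (∫⁻ x : ℝ, HLmax u x ^ p x) = ⊤ := by
  have humeas : Measurable u := by
    rw [hu]
    exact Measurable.ite measurableSet_Ici (by fun_prop) measurable_const
  have hunn : ∀ s, 0 ≤ u s := by
    intro s; rw [hu]; dsimp only
    split
    · positivity
    · exact le_rfl
  have hub : ∀ s, u s ≤ 1 := by
    intro s; rw [hu]; dsimp only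
    split
    · rename_i h
      have : |s| = s := abs_of_nonneg (by linarith)
      rw [this]
      exact Real.rpow_le_one_of_one_le_of_nonpos (by linarith) (by norm_num)
    · norm_num
  constructor
  · -- Part 1
    have hle : ∀ x : ℝ, ENNReal.ofReal (|u x| ^ p x)
        ≤ (Ici (2:ℝ)).indicator (fun x => ENNReal.ofReal (x ^ (-(4/3):ℝ))) x := by
      intro x
      by_cases hx : 2 ≤ x
      · rw [indicator_of_mem (show x ∈ Ici (2:ℝ) from hx)]
        apply ENNReal.ofReal_le_ofReal
        have hx0 : (0:ℝ) < x := by linarith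
        have hux : u x = x ^ (-(1/3):ℝ) := by
          rw [hu]; simp [hx, abs_of_nonneg hx0.le]
        have hb0 : (0:ℝ) < x ^ (-(1/3):ℝ) := Real.rpow_pos_of_pos hx0 _
        rw [abs_of_nonneg (hunn x), hux]
        calc (x ^ (-(1/3):ℝ)) ^ p x ≤ (x ^ (-(1/3):ℝ)) ^ (4:ℝ) := by
              apply Real.rpow_le_rpow_of_exponent_ge hb0
              · exact Real.rpow_le_one_of_one_le_of_nonpos (by linarith) (by norm_num)
              · exact hp4 x hx
          _ = x ^ (-(4/3):ℝ) := by
              rw [← Real.rpow_mul hx0.le]; norm_num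
      · rw [indicator_of_notMem (show x ∉ Ici (2:ℝ) from hx)]
        have : u x = 0 := by rw [hu]; simp [hx]
        rw [this, abs_zero, Real.zero_rpow (by have := hp1 x; linarith), ENNReal.ofReal_zero]
    calc (∫⁻ x : ℝ, ENNReal.ofReal (|u x| ^ p x))
        ≤ ∫⁻ x, (Ici (2:ℝ)).indicator (fun x => ENNReal.ofReal (x ^ (-(4/3):ℝ))) x :=
          lintegral_mono hle
      _ = ∫⁻ x in Ici (2:ℝ), ENNReal.ofReal (x ^ (-(4/3):ℝ)) :=
          lintegral_indicator measurableSet_Ici _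
      _ = ∫⁻ x in Ioi (2:ℝ), ENNReal.ofReal (x ^ (-(4/3):ℝ)) :=
          (setLIntegral_congr (Ioi_ae_eq_Ici (μ := volume) (a := (2:ℝ)))).symm
      _ < ⊤ := (integrableOn_Ioi_rpow_of_lt (by norm_num) (by norm_num : (0:ℝ) < 2)).lintegral_lt_top
  · -- Part 2
    have key : ∀ x : ℝ, x < -8 →
        ENNReal.ofReal ((9/256) * (-x) ^ (-(2/3):ℝ)) ≤ HLmax u x ^ p x := by
      intro x hx
      set y : ℝ := -x with hy
      have hy8 : (8:ℝ) < y := by simp [hy]; linarith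
      have hy0 : (0:ℝ) < y := by linarith
      -- step 1: HLmax lower bound
      have hIint : IntervalIntegrable (fun s => |u s|) volume (x - 2*y) (x + 2*y) := by
        constructor <;>
        · apply Measure.integrableOn_of_bounded (M := 1) measure_Ioc_lt_top.ne
            humeas.abs.aestronglyMeasurable
          filter_upwards with s
          rw [Real.norm_eq_abs, abs_abs, abs_of_nonneg (hunn s)]
          exact hub s
      have hcongr : ∫ s in (2:ℝ)..y, |u s| = ∫ s in (2:ℝ)..y, s ^ (-(1/3):ℝ) := by
        apply intervalIntegral.integral_congr
        intro s hs
        rw [uIcc_of_le (by linarith)] at hs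
        have h2s : (2:ℝ) ≤ s := hs.1
        have hs0 : (0:ℝ) < s := by linarith
        have hus : u s = s ^ (-(1/3):ℝ) := by
          rw [hu]; simp only [if_pos h2s, abs_of_nonneg hs0.le]
        show |u s| = s ^ (-(1/3):ℝ)
        rw [hus, abs_of_nonneg (Real.rpow_pos_of_pos hs0 (-(1/3):ℝ)).le]
      have hval : ∫ s in (2:ℝ)..y, s ^ (-(1/3):ℝ)
          = (y ^ ((2:ℝ)/3) - 2 ^ ((2:ℝ)/3)) / (2/3) := by
        rw [integral_rpow (Or.inl (by norm_num))]
        norm_num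
      have h2b : (2:ℝ) ^ ((2:ℝ)/3) ≤ 2 := by
        calc (2:ℝ) ^ ((2:ℝ)/3) ≤ (2:ℝ) ^ (1:ℝ) :=
            Real.rpow_le_rpow_of_exponent_le (by norm_num) (by norm_num)
          _ = 2 := Real.rpow_one 2
      have hy23 : (4:ℝ) ≤ y ^ ((2:ℝ)/3) := by
        have h8 : (8:ℝ) ^ ((2:ℝ)/3) = 4 := by
          rw [show (8:ℝ) = 2^(3:ℕ) by norm_num, ← Real.rpow_natCast 2 3,
            ← Real.rpow_mul (by norm_num)]
          norm_num
        calc (4:ℝ) = (8:ℝ) ^ ((2:ℝ)/3) := h8.symm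
          _ ≤ y ^ ((2:ℝ)/3) := Real.rpow_le_rpow (by norm_num) hy8.le (by norm_num)
      have hImono : ∫ s in (2:ℝ)..y, |u s| ≤ ∫ s in (x - 2*y)..(x + 2*y), |u s| := by
        apply intervalIntegral.integral_mono_interval (by nlinarith) (by linarith)
          (by simp [hy]; nlinarith)
        · filter_upwards with s; positivity
        · exact hIint
      have hIlow : (3/4) * y ^ ((2:ℝ)/3) ≤ ∫ s in (x - 2*y)..(x + 2*y), |u s| := by
        have := hImono
        rw [hcongr, hval] at this
        nlinarith
      have hid : y * y ^ (-(1/3):ℝ) = y ^ ((2:ℝ)/3) := by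
        rw [show y * y ^ (-(1/3):ℝ) = y ^ (1:ℝ) * y ^ (-(1/3):ℝ) by rw [Real.rpow_one],
          ← Real.rpow_add hy0]
        norm_num
      have hstep1 : ENNReal.ofReal ((3/16) * y ^ (-(1/3):ℝ)) ≤ HLmax u x := by
        have hr : (0:ℝ) < 2*y := by linarith
        refine le_trans ?_ (le_iSup_of_le (2*y) (le_iSup_of_le hr le_rfl))
        apply ENNReal.ofReal_le_ofReal
        have hpos : (0:ℝ) < y ^ (-(1/3):ℝ) := Real.rpow_pos_of_pos hy0 _
        have h1 : (1:ℝ) / (2 * (2*y)) = 1/(4*y) := by ring_nf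
        rw [h1]
        have h2 : (3/16) * y ^ (-(1/3):ℝ) = 1/(4*y) * ((3/4) * y ^ ((2:ℝ)/3)) := by
          rw [← hid]; field_simp; ring
        rw [h2]
        apply mul_le_mul_of_nonneg_left hIlow (by positivity)
      -- step 2: square
      have hpx : p x = 2 := hp2 x (by linarith)
      rw [hpx]
      calc ENNReal.ofReal ((9/256) * y ^ (-(2/3):ℝ))
          = ENNReal.ofReal (((3/16) * y ^ (-(1/3):ℝ)) ^ (2:ℝ)) := by
            congr 1
            rw [Real.mul_rpow (by norm_num) (Real.rpow_pos_of_pos hy0 _).le,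
              ← Real.rpow_mul hy0.le]
            norm_num
        _ = ENNReal.ofReal ((3/16) * y ^ (-(1/3):ℝ)) ^ (2:ℝ) := by
            rw [ENNReal.ofReal_rpow_of_pos (by positivity)]
        _ ≤ HLmax u x ^ (2:ℝ) := ENNReal.rpow_le_rpow hstep1 (by norm_num)
    -- the lower-bound integral is infinite
    have htop : ∫⁻ x in Iio (-8:ℝ), ENNReal.ofReal ((9/256) * (-x) ^ (-(2/3):ℝ)) = ⊤ := by
      by_contra h
      have hlt : ∫⁻ x in Iio (-8:ℝ), ENNReal.ofReal ((9/256) * (-x) ^ (-(2/3):ℝ)) < ⊤ :=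
        lt_top_iff_ne_top.2 h
      have hmeas : Measurable (fun x : ℝ => (9/256) * (-x) ^ (-(2/3):ℝ)) := by fun_prop
      have hint : IntegrableOn (fun x : ℝ => (9/256) * (-x) ^ (-(2/3):ℝ)) (Iio (-8:ℝ)) := by
        refine ⟨hmeas.aestronglyMeasurable, ?_⟩
        rw [hasFiniteIntegral_iff_ofReal ?_]
        · exact hlt
        · filter_upwards [ae_restrict_mem measurableSet_Iio] with x hx
          have : (0:ℝ) < -x := by simp at hx ⊢; linarith
          positivity
      have hint2 : IntegrableOn (fun x : ℝ => (-x) ^ (-(2/3):ℝ)) (Iio (-8:ℝ)) := by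
        have heq : (fun x : ℝ => ((9/256:ℝ)⁻¹) * ((9/256) * (-x) ^ (-(2/3):ℝ)))
            = fun x : ℝ => (-x) ^ (-(2/3):ℝ) := by
          funext x; field_simp
        exact heq ▸ hint.const_mul ((9/256:ℝ)⁻¹)
      have hpre : Iio (-8:ℝ) = Neg.neg ⁻¹' (Ioi (8:ℝ)) := by
        ext t; simp
      rw [hpre] at hint2
      have hint3 : IntegrableOn (fun x : ℝ => x ^ (-(2/3):ℝ)) (Ioi (8:ℝ)) := by
        rw [← (Measure.measurePreserving_neg (volume : Measure ℝ)).integrableOn_comp_preimage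
          (Homeomorph.neg ℝ).measurableEmbedding]
        exact hint2
      rw [integrableOn_Ioi_rpow_iff (by norm_num : (0:ℝ) < 8)] at hint3
      norm_num at hint3
    refine top_le_iff.1 ?_
    calc (⊤:ℝ≥0∞) = ∫⁻ x in Iio (-8:ℝ), ENNReal.ofReal ((9/256) * (-x) ^ (-(2/3):ℝ)) := htop.symm
      _ = ∫⁻ x, (Iio (-8:ℝ)).indicator
            (fun x => ENNReal.ofReal ((9/256) * (-x) ^ (-(2/3):ℝ))) x :=
          (lintegral_indicator measurableSet_Iio _).symm
      _ ≤ ∫⁻ x, HLmax u x ^ p x := by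
          apply lintegral_mono
          intro x
          by_cases hx : x ∈ Iio (-8:ℝ)
          · rw [indicator_of_mem hx]; exact key x hx
          · rw [indicator_of_notMem hx]; exact zero_le
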